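/- Let V = ℝ[k₀,0] ⊕ ⊕_{μ∈ℳ} ℝ[k_μ,μ] and W = ℝ[l₀,0] ⊕ ⊕_{μ∈ℳ} ℝ[l_μ,μ] be finite-dimensional orthogonal torus representations (k₀,l₀,k_μ,l_μ ∈ ℕ₀, all but finitely many k_μ, l_μ zero). Then for every μ ∈ ℳ and every N ∈ ℕ, the coefficient at χ_𝕋(𝕋/H_μ⁺) of the Euler-ring element χ_𝕋(S^V)^{−N} ⋆ (χ_𝕋(S^W)^N − 𝕀) equals (−1)^{k₀N} · N · ( (−1)^{l₀N+1} l_μ + ((−1)^{l₀N} − 1) k_μ ). -/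

import Mathlib

/-!
STATEMENT 7 (Lemma `codim1-coeff`, equation (2.6) of the paper).

The Euler ring `U(𝕋)` of the torus `𝕋` is modelled as the free ℤ-module
`Sub →₀ ℤ` on the closed subgroups of `𝕋` (the generator corresponding to `H` is
`Finsupp.single H 1 = χ_𝕋(𝕋/H⁺)`), with multiplication `eulerMul` determined by
`χ_𝕋(𝕋/H⁺) ⋆ χ_𝕋(𝕋/H'⁺) = χ_𝕋(𝕋/(H∩H')⁺)` if
`dim H + dim H' = dim 𝕋 + dim (H∩H')` and `Θ = 0` otherwise; the unit is
`𝕀 = χ_𝕋(𝕋/𝕋⁺) = Finsupp.single top 1`.  The coefficient of `x ∈ U(𝕋)` at the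
generator `χ_𝕋(𝕋/K⁺)` is the `Finsupp` value `x K`.

The representations `V = ℝ[k₀,0] ⊕ ⊕_{μ∈ℳ} ℝ[k_μ,μ]` and
`W = ℝ[l₀,0] ⊕ ⊕_{μ∈ℳ} ℝ[l_μ,μ]` enter through `a = χ_𝕋(S^V)`, its inverse
`ainv = χ_𝕋(S^V)⁻¹ = (−1)^{k₀}(𝕀 + Σ k_μ χ_𝕋(𝕋/H_μ⁺)) + 𝒪`, and
`b = χ_𝕋(S^W) = (−1)^{l₀}(𝕀 − Σ l_μ χ_𝕋(𝕋/H_μ⁺)) + 𝒪`;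
`χ_𝕋(S^V)^{−N}` is the `N`-th power of `ainv`.

Conclusion: for every `μ ∈ ℳ` and `N ∈ ℕ`, the coefficient at `χ_𝕋(𝕋/H_μ⁺)` of
`χ_𝕋(S^V)^{−N} ⋆ (χ_𝕋(S^W)^N − 𝕀)` equals
`(−1)^{k₀N} · N · ((−1)^{l₀N+1} l_μ + ((−1)^{l₀N} − 1) k_μ)`.
-/

/-- The Euler-ring multiplication of a torus on the free ℤ-module on the set of
closed subgroups. -/
noncomputable def eulerMul {Sub : Type*} (dimT : ℕ) (dim : Sub → ℕ)
    (inter : Sub → Sub → Sub) (x y : Sub →₀ ℤ) : Sub →₀ ℤ :=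
  x.sum fun H a => y.sum fun K b =>
    if dim H + dim K = dimT + dim (inter H K)
    then Finsupp.single (inter H K) (a * b) else 0

/-- Powers in the Euler ring (`x^0 = 𝕀 = χ_𝕋(𝕋/𝕋⁺)`). -/
noncomputable def eulerPow {Sub : Type*} (dimT : ℕ) (dim : Sub → ℕ)
    (inter : Sub → Sub → Sub) (top : Sub) (x : Sub →₀ ℤ) : ℕ → (Sub →₀ ℤ)
  | 0 => Finsupp.single top 1
  | n + 1 => eulerMul dimT dim inter x (eulerPow dimT dim inter top x n)

/-- `lowDim dimT dim y` : `y` is a ℤ-linear combination of generators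
`χ_𝕋(𝕋/H⁺)` with `dim H ≤ dim 𝕋 − 2`. -/
def lowDim {Sub : Type*} (dimT : ℕ) (dim : Sub → ℕ) (y : Sub →₀ ℤ) : Prop :=
  ∀ H ∈ y.support, dim H + 2 ≤ dimT


section aux
variable {Sub : Type*} {dimT : ℕ} {dim : Sub → ℕ} {inter : Sub → Sub → Sub}

lemma eMul_add_left (x x' y : Sub →₀ ℤ) :
    eulerMul dimT dim inter (x + x') y
      = eulerMul dimT dim inter x y + eulerMul dimT dim inter x' y := by
  unfold eulerMul
  refine Finsupp.sum_add_index' (fun H => ?_) (fun H a a' => ?_)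
  · simp
  · rw [← Finsupp.sum_add]
    congr 1; funext K b
    split <;> simp [add_mul, Finsupp.single_add]

lemma eMul_add_right (x y y' : Sub →₀ ℤ) :
    eulerMul dimT dim inter x (y + y')
      = eulerMul dimT dim inter x y + eulerMul dimT dim inter x y' := by
  unfold eulerMul
  rw [← Finsupp.sum_add]
  refine Finsupp.sum_congr fun H _ => ?_
  refine Finsupp.sum_add_index' (fun K => ?_) (fun K b b' => ?_)
  · simp
  · split <;> simp [mul_add, Finsupp.single_add]

lemma eMul_support {x y : Sub →₀ ℤ} {Hq : Sub}
    (h : Hq ∈ (eulerMul dimT dim inter x y).support) :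
    ∃ H ∈ x.support, ∃ K ∈ y.support,
      Hq = inter H K ∧ dim H + dim K = dimT + dim (inter H K) := by
  classical
  unfold eulerMul at h
  have h1 := Finsupp.support_sum h
  obtain ⟨H, hH, h2⟩ := Finset.mem_biUnion.1 h1
  have h3 := Finsupp.support_sum h2
  obtain ⟨K, hK, h4⟩ := Finset.mem_biUnion.1 h3
  refine ⟨H, hH, K, hK, ?_⟩
  by_cases hc : dim H + dim K = dimT + dim (inter H K)
  · rw [if_pos hc] at h4
    have := Finsupp.support_single_subset h4
    simp only [Finset.mem_singleton] at this
    exact ⟨this, hc⟩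
  · rw [if_neg hc] at h4; simp at h4

lemma eMul_top_left {top : Sub} (hdimtop : dim top = dimT)
    (hinter_top : ∀ H, inter top H = H) (c : ℤ) (y : Sub →₀ ℤ) :
    eulerMul dimT dim inter (Finsupp.single top c) y = c • y := by
  unfold eulerMul
  rw [Finsupp.sum_single_index (by simp)]
  conv_rhs => rw [← Finsupp.sum_single y, Finsupp.smul_sum]
  refine Finsupp.sum_congr fun K _ => ?_
  rw [hinter_top, hdimtop, if_pos rfl, Finsupp.smul_single, smul_eq_mul]

lemma eMul_top_right {top : Sub} (hdimtop : dim top = dimT)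
    (hinter_top' : ∀ H, inter H top = H) (c : ℤ) (x : Sub →₀ ℤ) :
    eulerMul dimT dim inter x (Finsupp.single top c) = c • x := by
  unfold eulerMul
  conv_rhs => rw [← Finsupp.sum_single x, Finsupp.smul_sum]
  refine Finsupp.sum_congr fun H _ => ?_
  rw [Finsupp.sum_single_index (by simp)]
  rw [hinter_top', hdimtop, if_pos (by ring), Finsupp.smul_single, smul_eq_mul,
    mul_comm]

lemma lowDim_add {O O' : Sub →₀ ℤ} (h : lowDim dimT dim O)
    (h' : lowDim dimT dim O') : lowDim dimT dim (O + O') := fun H hH => by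
  classical
  rcases Finset.mem_union.1 (Finsupp.support_add hH) with h1 | h1
  exacts [h _ h1, h' _ h1]

lemma lowDim_smul {O : Sub →₀ ℤ} (c : ℤ) (h : lowDim dimT dim O) :
    lowDim dimT dim (c • O) := fun H hH => by
  classical
  exact h _ (Finsupp.support_smul hH)

lemma lowDim_mul_left (hdim : ∀ H, dim H ≤ dimT) {O : Sub →₀ ℤ}
    (h : lowDim dimT dim O) (y : Sub →₀ ℤ) :
    lowDim dimT dim (eulerMul dimT dim inter O y) := by
  intro Hq hHq
  obtain ⟨H, hH, K, hK, rfl, hcond⟩ := eMul_support hHq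
  have := h H hH; have := hdim K; omega

lemma lowDim_mul_right (hdim : ∀ H, dim H ≤ dimT) {O : Sub →₀ ℤ}
    (h : lowDim dimT dim O) (x : Sub →₀ ℤ) :
    lowDim dimT dim (eulerMul dimT dim inter x O) := by
  intro Hq hHq
  obtain ⟨H, hH, K, hK, rfl, hcond⟩ := eMul_support hHq
  have := h K hK; have := hdim H; omega

lemma lowDim_mul_codim1 {x y : Sub →₀ ℤ}
    (hx : ∀ H ∈ x.support, dim H + 1 = dimT)
    (hy : ∀ H ∈ y.support, dim H + 1 = dimT) :
    lowDim dimT dim (eulerMul dimT dim inter x y) := by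
  intro Hq hHq
  obtain ⟨H, hH, K, hK, rfl, hcond⟩ := eMul_support hHq
  have := hx H hH; have := hy K hK; omega

end aux

section rep
variable {Sub : Type*} {dimT : ℕ} {dim : Sub → ℕ} {inter : Sub → Sub → Sub}
  {top : Sub} {Mw : Type*} {Hsub : Mw → Sub}

/-- `x ≡ c • 𝕀 + Σ_ν f(ν) χ(𝕋/H_ν⁺)` modulo lower-dimensional generators. -/
def EulerRep (dimT : ℕ) (dim : Sub → ℕ) (top : Sub) (Hsub : Mw → Sub)
    (c : ℤ) (f : Mw →₀ ℤ) (x : Sub →₀ ℤ) : Prop :=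
  ∃ O, lowDim dimT dim O ∧
    x = c • Finsupp.single top 1 + Finsupp.mapDomain Hsub f + O

lemma mapDomain_codim1 (hHsub : ∀ ν, dim (Hsub ν) + 1 = dimT) (f : Mw →₀ ℤ) :
    ∀ H ∈ (Finsupp.mapDomain Hsub f).support, dim H + 1 = dimT := by
  classical
  intro H hH
  obtain ⟨ν, -, rfl⟩ := Finset.mem_image.1 (Finsupp.mapDomain_support hH)
  exact hHsub ν

lemma eulerRep_mul (hdim : ∀ H, dim H ≤ dimT) (hdimtop : dim top = dimT)
    (hinter_top : ∀ H, inter top H = H) (hinter_top' : ∀ H, inter H top = H)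
    (hHsub : ∀ ν, dim (Hsub ν) + 1 = dimT)
    {c c' : ℤ} {f f' : Mw →₀ ℤ} {x y : Sub →₀ ℤ}
    (hx : EulerRep dimT dim top Hsub c f x)
    (hy : EulerRep dimT dim top Hsub c' f' y) :
    EulerRep dimT dim top Hsub (c * c') (c' • f + c • f')
      (eulerMul dimT dim inter x y) := by
  obtain ⟨O, hO, rfl⟩ := hx
  obtain ⟨O', hO', hy⟩ := hy
  set T : Sub →₀ ℤ := Finsupp.single top 1 with hT
  set Mf := Finsupp.mapDomain Hsub f with hMf
  set Mf' := Finsupp.mapDomain Hsub f' with hMf'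
  have hcT : ∀ d : ℤ, d • T = Finsupp.single top d := fun d => by
    rw [hT, Finsupp.smul_single, smul_eq_mul, mul_one]
  have e1 : eulerMul dimT dim inter (c • T + Mf + O) y
      = eulerMul dimT dim inter (c • T) y + eulerMul dimT dim inter Mf y
        + eulerMul dimT dim inter O y := by
    rw [eMul_add_left, eMul_add_left]
  have e2 : eulerMul dimT dim inter (c • T) y = c • y := by
    rw [hcT, eMul_top_left hdimtop hinter_top]
  have e3 : eulerMul dimT dim inter Mf y
      = c' • Mf + eulerMul dimT dim inter Mf Mf'
        + eulerMul dimT dim inter Mf O' := by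
    rw [hy, eMul_add_right, eMul_add_right, hcT,
      eMul_top_right hdimtop hinter_top']
  refine ⟨c • O' + eulerMul dimT dim inter Mf Mf'
      + eulerMul dimT dim inter Mf O' + eulerMul dimT dim inter O y, ?_, ?_⟩
  · exact lowDim_add (lowDim_add (lowDim_add (lowDim_smul _ hO')
      (lowDim_mul_codim1 (mapDomain_codim1 hHsub f) (mapDomain_codim1 hHsub f')))
      (lowDim_mul_right hdim hO' _)) (lowDim_mul_left hdim hO _)
  · rw [e1, e2, e3, hy, Finsupp.mapDomain_add, Finsupp.mapDomain_smul,
      Finsupp.mapDomain_smul, ← hMf, ← hMf']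
    module

lemma eulerRep_pow (hdim : ∀ H, dim H ≤ dimT) (hdimtop : dim top = dimT)
    (hinter_top : ∀ H, inter top H = H) (hinter_top' : ∀ H, inter H top = H)
    (hHsub : ∀ ν, dim (Hsub ν) + 1 = dimT)
    {c : ℤ} (hc : c * c = 1) {f : Mw →₀ ℤ} {x : Sub →₀ ℤ}
    (hx : EulerRep dimT dim top Hsub c f x) (n : ℕ) :
    EulerRep dimT dim top Hsub (c ^ n) (((n : ℤ) * c ^ (n + 1)) • f)
      (eulerPow dimT dim inter top x n) := by
  induction n with
  | zero =>
      refine ⟨0, fun H hH => by simp at hH, ?_⟩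
      simp [eulerPow]
  | succ n ih =>
      have h := eulerRep_mul hdim hdimtop hinter_top hinter_top' hHsub hx ih
      have e1 : c * c ^ n = c ^ (n + 1) := by rw [pow_succ, mul_comm]
      have e2 : (c ^ n) • f + c • (((n : ℤ) * c ^ (n + 1)) • f)
          = (((n : ℕ) + 1 : ℤ) * c ^ (n + 1 + 1)) • f := by
        rw [smul_smul, ← add_smul]
        congr 1
        linear_combination (-(c ^ n)) * hc
      rw [e1, e2] at h
      have : (((n : ℕ) + 1 : ℤ)) = (((n + 1 : ℕ) : ℤ)) := by push_cast; ring
      rw [this] at h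
      exact h

lemma eulerRep_coeff (hdimtop : dim top = dimT)
    (hHsub : ∀ ν, dim (Hsub ν) + 1 = dimT)
    (hHsubInj : Function.Injective Hsub) {c : ℤ} {f : Mw →₀ ℤ} {x : Sub →₀ ℤ}
    (hx : EulerRep dimT dim top Hsub c f x) (μ : Mw) : x (Hsub μ) = f μ := by
  obtain ⟨O, hO, rfl⟩ := hx
  have hne : top ≠ Hsub μ := by
    intro h
    have h1 := hHsub μ
    rw [← h, hdimtop] at h1
    omega
  have h1 : ∀ d : ℤ, Finsupp.single top d (Hsub μ) = 0 := fun d =>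
    Finsupp.single_eq_of_ne' hne
  have h2 : O (Hsub μ) = 0 := by
    by_contra h
    have := hO _ (Finsupp.mem_support_iff.2 h)
    have := hHsub μ
    omega
  simp [Finsupp.add_apply, Finsupp.smul_apply, h1, h2,
    Finsupp.mapDomain_apply hHsubInj]

lemma sum_eq_mapDomain (k : Mw →₀ ℕ) :
    (k.sum fun ν n => (n : ℤ) • Finsupp.single (Hsub ν) (1 : ℤ))
      = Finsupp.mapDomain Hsub (k.mapRange (Nat.cast) (by simp)) := by
  rw [Finsupp.mapDomain, Finsupp.sum_mapRange_index (by simp)]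
  refine Finsupp.sum_congr fun ν _ => ?_
  rw [Finsupp.smul_single, smul_eq_mul, mul_one]

end rep

theorem statement7
    -- the closed subgroups of the torus 𝕋, their dimensions and intersections
    (Sub : Type*) (dimT : ℕ) (dim : Sub → ℕ) (hdim : ∀ H, dim H ≤ dimT)
    (inter : Sub → Sub → Sub)
    (hinter_left : ∀ H K, dim (inter H K) ≤ dim H)
    (hinter_right : ∀ H K, dim (inter H K) ≤ dim K)
    (top : Sub) (hdimtop : dim top = dimT)
    (hinter_top : ∀ H, inter top H = H) (hinter_top' : ∀ H, inter H top = H)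
    -- ℳ: the chosen set of nonzero weights (one of each pair ±μ)
    (Mw : Type*)
    -- μ ↦ H_μ = {exp(φ) : μ(φ) ∈ 2πℤ}, the codimension-one isotropy subgroups
    (Hsub : Mw → Sub)
    (hHsub : ∀ ν, dim (Hsub ν) + 1 = dimT)
    (hHsubInj : Function.Injective Hsub)
    -- multiplicities of V = ℝ[k₀,0] ⊕ ⊕_{μ∈ℳ} ℝ[k_μ,μ] and W = ℝ[l₀,0] ⊕ ⊕ ℝ[l_μ,μ]
    (k₀ l₀ : ℕ) (k l : Mw →₀ ℕ)
    -- a = χ_𝕋(S^V), ainv = χ_𝕋(S^V)⁻¹, b = χ_𝕋(S^W)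
    (a ainv b : Sub →₀ ℤ)
    (ha : ∃ O : Sub →₀ ℤ, lowDim dimT dim O ∧
      a = (-1 : ℤ) ^ k₀ • (Finsupp.single top 1
        - k.sum fun ν n => (n : ℤ) • Finsupp.single (Hsub ν) 1) + O)
    -- ainv is the Euler-ring inverse of a = χ_𝕋(S^V) …
    (hainv_l : eulerMul dimT dim inter a ainv = Finsupp.single top 1)
    (hainv_r : eulerMul dimT dim inter ainv a = Finsupp.single top 1)
    -- … with the expansion χ_𝕋(S^V)⁻¹ = (−1)^{k₀}(𝕀 + Σ k_μ χ_𝕋(𝕋/H_μ⁺)) + 𝒪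
    (hainv : ∃ O : Sub →₀ ℤ, lowDim dimT dim O ∧
      ainv = (-1 : ℤ) ^ k₀ • (Finsupp.single top 1
        + k.sum fun ν n => (n : ℤ) • Finsupp.single (Hsub ν) 1) + O)
    (hb : ∃ O : Sub →₀ ℤ, lowDim dimT dim O ∧
      b = (-1 : ℤ) ^ l₀ • (Finsupp.single top 1
        - l.sum fun ν n => (n : ℤ) • Finsupp.single (Hsub ν) 1) + O)
    (μ : Mw) (N : ℕ) (hN : 0 < N) :
    (eulerMul dimT dim inter (eulerPow dimT dim inter top ainv N)
        (eulerPow dimT dim inter top b N - Finsupp.single top 1)) (Hsub μ)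
      = (-1 : ℤ) ^ (k₀ * N) * (N : ℤ) *
          ((-1 : ℤ) ^ (l₀ * N + 1) * (l μ : ℤ)
            + ((-1 : ℤ) ^ (l₀ * N) - 1) * (k μ : ℤ)) := by
  classical
  set cA : ℤ := (-1) ^ k₀ with hcA
  set cB : ℤ := (-1) ^ l₀ with hcB
  set kZ : Mw →₀ ℤ := k.mapRange Nat.cast (by simp) with hkZ
  set lZ : Mw →₀ ℤ := l.mapRange Nat.cast (by simp) with hlZ
  have haa : cA * cA = 1 := by rw [hcA, ← mul_pow]; norm_num
  have hbb : cB * cB = 1 := by rw [hcB, ← mul_pow]; norm_num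
  have hA : EulerRep dimT dim top Hsub cA (cA • kZ) ainv := by
    obtain ⟨O, hO, hO2⟩ := hainv
    refine ⟨O, hO, ?_⟩
    rw [hO2, sum_eq_mapDomain, Finsupp.mapDomain_smul]
    module
  have hB : EulerRep dimT dim top Hsub cB ((-cB) • lZ) b := by
    obtain ⟨O, hO, hO2⟩ := hb
    refine ⟨O, hO, ?_⟩
    rw [hO2, sum_eq_mapDomain, Finsupp.mapDomain_smul]
    module
  have hAN := eulerRep_pow (inter := inter) hdim hdimtop hinter_top hinter_top'
    hHsub haa hA N
  have hBN := eulerRep_pow (inter := inter) hdim hdimtop hinter_top hinter_top'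
    hHsub hbb hB N
  have hBN' : EulerRep dimT dim top Hsub (cB ^ N - 1)
      (((N : ℤ) * cB ^ (N + 1)) • ((-cB) • lZ))
      (eulerPow dimT dim inter top b N - Finsupp.single top 1) := by
    obtain ⟨O, hO, hO2⟩ := hBN
    refine ⟨O, hO, ?_⟩
    rw [hO2]
    module
  have hprod := eulerRep_mul hdim hdimtop hinter_top hinter_top' hHsub hAN hBN'
  rw [eulerRep_coeff hdimtop hHsub hHsubInj hprod μ]
  have hk : kZ μ = (k μ : ℤ) := by rw [hkZ, Finsupp.mapRange_apply]
  have hl : lZ μ = (l μ : ℤ) := by rw [hlZ, Finsupp.mapRange_apply]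
  simp only [Finsupp.add_apply, Finsupp.smul_apply, smul_eq_mul, hk, hl]
  rw [show (-1 : ℤ) ^ (k₀ * N) = cA ^ N by rw [hcA, pow_mul],
    show (-1 : ℤ) ^ (l₀ * N) = cB ^ N by rw [hcB, pow_mul],
    show (-1 : ℤ) ^ (l₀ * N + 1) = -(cB ^ N) by rw [pow_succ, hcB, pow_mul]; ring]
  linear_combination ((cB ^ N - 1) * (N : ℤ) * (k μ : ℤ) * cA ^ N) * haa
    + (-(cA ^ N) * (N : ℤ) * (l μ : ℤ) * cB ^ N) * hbb
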